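/- Under the three-sequence 1-mer model, fix u, v, w ∈ [L] and nonzero reals α, β, γ with α·π₁(u) + β·π₂(v) + γ·π₃(w) = 0, and set Y = α·X₁^u + β·X₂^v + γ·X₃^w. Then P(u,v,w) = (1/(6αβγ n))·E[Y³] − (1/2)·( ((α+β)/γ)·P₁₂(u,v) + ((α+γ)/β)·P₁₃(u,w) + ((β+γ)/α)·P₂₃(v,w) ) − (1/6)·( (α²/(βγ))·π₁(u) + (β²/(αγ))·π₂(v) + (γ²/(αβ))·π₃(w) ). -/

import Mathlib

/-!
Three-sequence 1-mer model: site triples i.i.d. with distribution `P` on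
`[L]³`, strictly positive one-dimensional marginals `π₁, π₂, π₃`, and
two-dimensional marginals `P₁₂, P₁₃, P₂₃`.  For fixed `u, v, w` and nonzero
`α, β, γ` with `α π₁(u) + β π₂(v) + γ π₃(w) = 0`, and
`Y = α X₁^u + β X₂^v + γ X₃^w`, the three-way joint probability `P(u,v,w)`
is recovered from `E[Y³]` and the lower-order marginals.
-/

theorem exp_prod {n : ℕ} {S : Type*} [Fintype S] [DecidableEq S] (q : S → ℝ) (g : Fin n → S → ℝ) :
    ∑ ω : Fin n → S, (∏ i, q (ω i)) * ∏ i, g i (ω i) = ∏ i, ∑ s, q s * g i s := by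
  rw [Finset.prod_univ_sum, Fintype.piFinset_univ]
  exact Finset.sum_congr rfl fun ω _ => (Finset.prod_mul_distrib).symm

theorem third_moment {n : ℕ} {S : Type*} [Fintype S] [DecidableEq S] (q : S → ℝ) (f : S → ℝ)
    (hq1 : ∑ s, q s = 1) (hm1 : ∑ s, q s * f s = 0) :
    ∑ ω : Fin n → S, (∏ i, q (ω i)) * (∑ i, f (ω i)) ^ 3
      = n * ∑ s, q s * f s ^ 3 := by
  have key : ∀ i j k : Fin n,
      ∑ ω : Fin n → S, (∏ l, q (ω l)) * (f (ω i) * f (ω j) * f (ω k))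
        = if i = j then (if i = k then ∑ s, q s * f s ^ 3 else 0) else 0 := by
    intro i j k
    have hg : ∀ ω : Fin n → S, f (ω i) * f (ω j) * f (ω k)
        = ∏ l, ((if i = l then f (ω l) else 1) * (if j = l then f (ω l) else 1)
            * (if k = l then f (ω l) else 1)) := by
      intro ω
      rw [Finset.prod_mul_distrib, Finset.prod_mul_distrib]
      simp [Finset.prod_ite_eq]
    have hfac := exp_prod q (fun l s => (if i = l then f s else 1) * (if j = l then f s else 1)
        * (if k = l then f s else 1))
    calc ∑ ω : Fin n → S, (∏ l, q (ω l)) * (f (ω i) * f (ω j) * f (ω k))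
        = ∏ l, ∑ s, q s * ((if i = l then f s else 1) * (if j = l then f s else 1)
            * (if k = l then f s else 1)) := by
          rw [← hfac]; exact Finset.sum_congr rfl fun ω _ => by rw [hg ω]
      _ = _ := ?_
    by_cases hij : i = j
    · by_cases hik : i = k
      · subst hij; subst hik
        rw [if_pos rfl, if_pos rfl]
        rw [Finset.prod_eq_single i]
        · refine Finset.sum_congr rfl fun s _ => ?_
          have hii : (if i = i then f s else 1) = f s := if_pos rfl
          rw [hii]; ring
        · intro l _ hl
          have h1 : ∀ s : S, q s * ((if i = l then f s else 1) * (if i = l then f s else 1)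
              * (if i = l then f s else 1)) = q s := fun s => by
            simp [Ne.symm hl]
          rw [Finset.sum_congr rfl fun s _ => h1 s]; exact hq1
        · simp
      · subst hij
        rw [if_pos rfl, if_neg hik]
        apply Finset.prod_eq_zero (Finset.mem_univ k)
        have h1 : ∀ s : S, q s * ((if i = k then f s else 1) * (if i = k then f s else 1)
            * (if k = k then f s else 1)) = q s * f s := fun s => by simp [hik]
        rw [Finset.sum_congr rfl fun s _ => h1 s]; exact hm1
    · rw [if_neg hij]
      by_cases hik : i = k
      · subst hik
        apply Finset.prod_eq_zero (Finset.mem_univ j)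
        have h1 : ∀ s : S, q s * ((if i = j then f s else 1) * (if j = j then f s else 1)
            * (if i = j then f s else 1)) = q s * f s := fun s => by simp [hij]
        rw [Finset.sum_congr rfl fun s _ => h1 s]; exact hm1
      · apply Finset.prod_eq_zero (Finset.mem_univ i)
        have h1 : ∀ s : S, q s * ((if i = i then f s else 1) * (if j = i then f s else 1)
            * (if k = i then f s else 1)) = q s * f s := fun s => by
          simp [Ne.symm hij, Ne.symm hik]
        rw [Finset.sum_congr rfl fun s _ => h1 s]; exact hm1
  calc ∑ ω : Fin n → S, (∏ i, q (ω i)) * (∑ i, f (ω i)) ^ 3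
      = ∑ ω : Fin n → S, ∑ i, ∑ j, ∑ k, (∏ l, q (ω l)) * (f (ω i) * f (ω j) * f (ω k)) := by
        refine Finset.sum_congr rfl fun ω _ => ?_
        rw [show (∑ i, f (ω i)) ^ 3
            = (∑ i, f (ω i)) * (∑ j, f (ω j)) * (∑ k, f (ω k)) by ring]
        simp only [Finset.sum_mul, Finset.mul_sum]
        exact Finset.sum_congr rfl fun i _ => Finset.sum_congr rfl fun j _ =>
          Finset.sum_congr rfl fun k _ => by ring
    _ = ∑ i, ∑ j, ∑ k, ∑ ω : Fin n → S, (∏ l, q (ω l)) * (f (ω i) * f (ω j) * f (ω k)) := by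
        rw [Finset.sum_comm]
        refine Finset.sum_congr rfl fun i _ => ?_
        rw [Finset.sum_comm]
        refine Finset.sum_congr rfl fun j _ => ?_
        rw [Finset.sum_comm]
    _ = ∑ i : Fin n, ∑ j, ∑ k, if i = j then (if i = k then ∑ s, q s * f s ^ 3 else 0) else 0 := by
        exact Finset.sum_congr rfl fun i _ => Finset.sum_congr rfl fun j _ =>
          Finset.sum_congr rfl fun k _ => key i j k
    _ = n * ∑ s, q s * f s ^ 3 := by
        simp [Finset.sum_ite_eq, Finset.mul_sum]

theorem cube_expand (α β γ a b c : ℝ) (ha : a = 0 ∨ a = 1) (hb : b = 0 ∨ b = 1)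
    (hc : c = 0 ∨ c = 1) :
    (α * a + β * b + γ * c) ^ 3
      = α ^ 3 * a + β ^ 3 * b + γ ^ 3 * c + 3 * α * β * (α + β) * (a * b)
        + 3 * α * γ * (α + γ) * (a * c) + 3 * β * γ * (β + γ) * (b * c)
        + 6 * α * β * γ * (a * b * c) := by
  rcases ha with h | h <;> rcases hb with h' | h' <;> rcases hc with h'' | h'' <;>
    subst h <;> subst h' <;> subst h'' <;> ring


theorem threeway_identifiability_from_onemers
    (L n : ℕ) (hL : 1 ≤ L) (hn : 1 ≤ n)
    (P : Fin L → Fin L → Fin L → ℝ)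
    (hP0 : ∀ u v w, 0 ≤ P u v w)
    (hP1 : ∑ u, ∑ v, ∑ w, P u v w = 1)
    (π₁ π₂ π₃ : Fin L → ℝ)
    (hπ₁ : ∀ u, π₁ u = ∑ v, ∑ w, P u v w)
    (hπ₂ : ∀ v, π₂ v = ∑ u, ∑ w, P u v w)
    (hπ₃ : ∀ w, π₃ w = ∑ u, ∑ v, P u v w)
    (hπ₁pos : ∀ u, 0 < π₁ u) (hπ₂pos : ∀ v, 0 < π₂ v) (hπ₃pos : ∀ w, 0 < π₃ w)
    (P₁₂ P₁₃ P₂₃ : Fin L → Fin L → ℝ)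
    (hP₁₂ : ∀ u v, P₁₂ u v = ∑ w, P u v w)
    (hP₁₃ : ∀ u w, P₁₃ u w = ∑ v, P u v w)
    (hP₂₃ : ∀ v w, P₂₃ v w = ∑ u, P u v w)
    (prob : (Fin n → Fin L × Fin L × Fin L) → ℝ)
    (hprob : ∀ ω, prob ω = ∏ i, P (ω i).1 (ω i).2.1 (ω i).2.2)
    (E : ((Fin n → Fin L × Fin L × Fin L) → ℝ) → ℝ)
    (hE : ∀ f, E f = ∑ ω, prob ω * f ω)
    (X₁ X₂ X₃ : Fin L → (Fin n → Fin L × Fin L × Fin L) → ℝ)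
    (hX₁ : ∀ a ω, X₁ a ω = ∑ i : Fin n, if (ω i).1 = a then 1 else 0)
    (hX₂ : ∀ a ω, X₂ a ω = ∑ i : Fin n, if (ω i).2.1 = a then 1 else 0)
    (hX₃ : ∀ a ω, X₃ a ω = ∑ i : Fin n, if (ω i).2.2 = a then 1 else 0)
    (u v w : Fin L)
    (α β γ : ℝ) (hα : α ≠ 0) (hβ : β ≠ 0) (hγ : γ ≠ 0)
    (hconstraint : α * π₁ u + β * π₂ v + γ * π₃ w = 0)
    (Y : (Fin n → Fin L × Fin L × Fin L) → ℝ)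
    (hY : ∀ ω, Y ω = α * X₁ u ω + β * X₂ v ω + γ * X₃ w ω) :
    P u v w = (1 / (6 * α * β * γ * (n : ℝ))) * E (fun ω => Y ω ^ 3)
      - (1 / 2) * (((α + β) / γ) * P₁₂ u v + ((α + γ) / β) * P₁₃ u w
          + ((β + γ) / α) * P₂₃ v w)
      - (1 / 6) * ((α ^ 2 / (β * γ)) * π₁ u + (β ^ 2 / (α * γ)) * π₂ v
          + (γ ^ 2 / (α * β)) * π₃ w) := by
  classical
  set q : Fin L × Fin L × Fin L → ℝ := fun s => P s.1 s.2.1 s.2.2 with hq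
  set f : Fin L × Fin L × Fin L → ℝ := fun s =>
    α * (if s.1 = u then 1 else 0) + β * (if s.2.1 = v then 1 else 0)
      + γ * (if s.2.2 = w then 1 else 0) with hf
  have hsum3 : ∀ g : Fin L × Fin L × Fin L → ℝ,
      ∑ s, g s = ∑ x, ∑ y, ∑ z, g (x, y, z) := by
    intro g
    rw [Fintype.sum_prod_type]
    exact Finset.sum_congr rfl fun x _ => Fintype.sum_prod_type _
  have hq1 : ∑ s, q s = 1 := by
    rw [hsum3]; exact hP1
  have hA : ∑ s, q s * (if s.1 = u then 1 else 0) = π₁ u := by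
    rw [hsum3, hπ₁]
    rw [Finset.sum_eq_single u (fun x _ hx => by simp [hx])
      (fun h => absurd (Finset.mem_univ u) h)]
    simp [hq]
  have hB : ∑ s, q s * (if s.2.1 = v then 1 else 0) = π₂ v := by
    rw [hsum3, hπ₂]
    refine Finset.sum_congr rfl fun x _ => ?_
    rw [Finset.sum_eq_single v (fun y _ hy => by simp [hy])
      (fun h => absurd (Finset.mem_univ v) h)]
    simp [hq]
  have hC : ∑ s, q s * (if s.2.2 = w then 1 else 0) = π₃ w := by
    rw [hsum3, hπ₃]
    refine Finset.sum_congr rfl fun x _ => Finset.sum_congr rfl fun y _ => ?_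
    rw [Finset.sum_eq_single w (fun z _ hz => by simp [hz])
      (fun h => absurd (Finset.mem_univ w) h)]
    simp [hq]
  have hAB : ∑ s, q s * ((if s.1 = u then 1 else 0) * (if s.2.1 = v then 1 else 0))
      = P₁₂ u v := by
    rw [hsum3, hP₁₂]
    rw [Finset.sum_eq_single u (fun x _ hx => by simp [hx])
      (fun h => absurd (Finset.mem_univ u) h)]
    rw [Finset.sum_eq_single v (fun y _ hy => by simp [hy])
      (fun h => absurd (Finset.mem_univ v) h)]
    simp [hq]
  have hAC : ∑ s, q s * ((if s.1 = u then 1 else 0) * (if s.2.2 = w then 1 else 0))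
      = P₁₃ u w := by
    rw [hsum3, hP₁₃]
    rw [Finset.sum_eq_single u (fun x _ hx => by simp [hx])
      (fun h => absurd (Finset.mem_univ u) h)]
    refine Finset.sum_congr rfl fun y _ => ?_
    rw [Finset.sum_eq_single w (fun z _ hz => by simp [hz])
      (fun h => absurd (Finset.mem_univ w) h)]
    simp [hq]
  have hBC : ∑ s, q s * ((if s.2.1 = v then 1 else 0) * (if s.2.2 = w then 1 else 0))
      = P₂₃ v w := by
    rw [hsum3, hP₂₃]
    refine Finset.sum_congr rfl fun x _ => ?_
    rw [Finset.sum_eq_single v (fun y _ hy => by simp [hy])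
      (fun h => absurd (Finset.mem_univ v) h)]
    rw [Finset.sum_eq_single w (fun z _ hz => by simp [hz])
      (fun h => absurd (Finset.mem_univ w) h)]
    simp [hq]
  have hABC : ∑ s, q s * ((if s.1 = u then 1 else 0) * (if s.2.1 = v then 1 else 0)
      * (if s.2.2 = w then 1 else 0)) = P u v w := by
    rw [hsum3]
    rw [Finset.sum_eq_single u (fun x _ hx => by simp [hx])
      (fun h => absurd (Finset.mem_univ u) h)]
    rw [Finset.sum_eq_single v (fun y _ hy => by simp [hy])
      (fun h => absurd (Finset.mem_univ v) h)]
    rw [Finset.sum_eq_single w (fun z _ hz => by simp [hz])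
      (fun h => absurd (Finset.mem_univ w) h)]
    simp [hq]
  have hm1 : ∑ s, q s * f s = 0 := by
    have hpt : ∀ s : Fin L × Fin L × Fin L, q s * f s
        = α * (q s * (if s.1 = u then 1 else 0)) + β * (q s * (if s.2.1 = v then 1 else 0))
          + γ * (q s * (if s.2.2 = w then 1 else 0)) := by
      intro s; rw [hf]; ring
    rw [Finset.sum_congr rfl fun s _ => hpt s]
    simp only [Finset.sum_add_distrib, ← Finset.mul_sum]
    rw [hA, hB, hC]
    exact hconstraint
  have hm3 : ∑ s, q s * f s ^ 3
      = α ^ 3 * π₁ u + β ^ 3 * π₂ v + γ ^ 3 * π₃ w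
        + 3 * α * β * (α + β) * P₁₂ u v + 3 * α * γ * (α + γ) * P₁₃ u w
        + 3 * β * γ * (β + γ) * P₂₃ v w + 6 * α * β * γ * P u v w := by
    have hpt : ∀ s : Fin L × Fin L × Fin L, q s * f s ^ 3
        = α ^ 3 * (q s * (if s.1 = u then 1 else 0))
          + β ^ 3 * (q s * (if s.2.1 = v then 1 else 0))
          + γ ^ 3 * (q s * (if s.2.2 = w then 1 else 0))
          + 3 * α * β * (α + β) * (q s * ((if s.1 = u then 1 else 0) * (if s.2.1 = v then 1 else 0)))
          + 3 * α * γ * (α + γ) * (q s * ((if s.1 = u then 1 else 0) * (if s.2.2 = w then 1 else 0)))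
          + 3 * β * γ * (β + γ) * (q s * ((if s.2.1 = v then 1 else 0) * (if s.2.2 = w then 1 else 0)))
          + 6 * α * β * γ * (q s * ((if s.1 = u then 1 else 0) * (if s.2.1 = v then 1 else 0)
              * (if s.2.2 = w then 1 else 0))) := by
      intro s
      rw [hf]
      rw [cube_expand α β γ _ _ _
        (by by_cases h : s.1 = u <;> simp [h])
        (by by_cases h : s.2.1 = v <;> simp [h])
        (by by_cases h : s.2.2 = w <;> simp [h])]
      ring
    rw [Finset.sum_congr rfl fun s _ => hpt s]
    simp only [Finset.sum_add_distrib, ← Finset.mul_sum]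
    rw [hA, hB, hC, hAB, hAC, hBC, hABC]
  have hprob' : ∀ ω, prob ω = ∏ i, q (ω i) := fun ω => hprob ω
  have hYf : ∀ ω, Y ω = ∑ i, f (ω i) := by
    intro ω
    rw [hY, hX₁, hX₂, hX₃, Finset.mul_sum, Finset.mul_sum, Finset.mul_sum,
      ← Finset.sum_add_distrib, ← Finset.sum_add_distrib]
  have hEY : E (fun ω => Y ω ^ 3) = n * ∑ s, q s * f s ^ 3 := by
    rw [hE]
    rw [Finset.sum_congr rfl fun ω _ => by rw [hprob' ω, hYf ω]]
    exact third_moment q f hq1 hm1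
  have hn0 : (n : ℝ) ≠ 0 := Nat.cast_ne_zero.mpr (by omega)
  rw [hEY, hm3]
  field_simp
  ring
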